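/- A consequence relation ⊢ on a set L is monotonic and reflexive if and only if it has a sound and complete intersective p-mixed semantics, i.e. a sound and complete intersective mixed semantics with D_p^λ ⊆ D_c^λ for every λ. -/

import Mathlib

universe u v w x

/-- Mixed truth-relation. -/
def Mixed {V : Type*} (Dp Dc : Set V) (γ δ : Set V) : Prop :=
  γ ⊆ Dp → (δ ∩ Dc).Nonempty

def Monotonic {L : Type*} (Cons : Set L → Set L → Prop) : Prop :=
  ∀ ⦃Γ₁ Γ₂ Δ₁ Δ₂ : Set L⦄, Γ₁ ⊆ Γ₂ → Δ₁ ⊆ Δ₂ → Cons Γ₁ Δ₁ → Cons Γ₂ Δ₂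

def ReflRel {L : Type*} (Cons : Set L → Set L → Prop) : Prop :=
  ∀ F : L, Cons {F} {F}

def TransRel {L : Type*} (Cons : Set L → Set L → Prop) : Prop :=
  ∀ Γ Δ : Set L, ¬ Cons Γ Δ →
    ∃ Γ' Δ' : Set L, Γ ⊆ Γ' ∧ Δ ⊆ Δ' ∧ ¬ Cons Γ' Δ' ∧ Γ' ∪ Δ' = Set.univ

def LRPermeable {L : Type*} (Cons : Set L → Set L → Prop) : Prop :=
  ∀ Γ Δ S : Set L, Cons (Γ ∪ S) Δ → Cons Γ (S ∪ Δ)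

def RLPermeable {L : Type*} (Cons : Set L → Set L → Prop) : Prop :=
  ∀ Γ Δ S : Set L, Cons Γ (S ∪ Δ) → Cons (Γ ∪ S) Δ

def Permeable {L : Type*} (Cons : Set L → Set L → Prop) : Prop :=
  LRPermeable Cons ∨ RLPermeable Cons

def CompactRel {L : Type*} (Cons : Set L → Set L → Prop) : Prop :=
  ∀ Γ Δ : Set L, Cons Γ Δ →
    ∃ Γ' Δ' : Set L, Γ' ⊆ Γ ∧ Δ' ⊆ Δ ∧ Γ'.Finite ∧ Δ'.Finite ∧ Cons Γ' Δ'

/-- Sound and complete intersective mixed semantics. -/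
def IsIMS {L V W Λ : Type*} (Cons : Set L → Set L → Prop)
    (interp : L → W → V) (Dp Dc : Λ → Set V) : Prop :=
  ∀ Γ Δ : Set L, Cons Γ Δ ↔
    ∀ (w : W) (l : Λ), Mixed (Dp l) (Dc l)
      ((fun F => interp F w) '' Γ) ((fun F => interp F w) '' Δ)

/-- Sound and complete mixed semantics (single pair). -/
def IsMixedSem {L V W : Type*} (Cons : Set L → Set L → Prop)
    (interp : L → W → V) (Dp Dc : Set V) : Prop :=
  ∀ Γ Δ : Set L, Cons Γ Δ ↔
    ∀ w : W, Mixed Dp Dc ((fun F => interp F w) '' Γ) ((fun F => interp F w) '' Δ)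

/-- Formulae of a sentential language. -/
inductive Formula (A : Type u) (C : Type u) (ar : C → ℕ) : Type u
  | atom : A → Formula A C ar
  | conn : (c : C) → (Fin (ar c) → Formula A C ar) → Formula A C ar

/-- Substitution induced by a map from atoms to formulae. -/
def Formula.subst {A C : Type u} {ar : C → ℕ} (σ : A → Formula A C ar) :
    Formula A C ar → Formula A C ar
  | .atom a => σ a
  | .conn c Fs => .conn c (fun i => (Fs i).subst σ)

def SubstInvariant {A C : Type u} {ar : C → ℕ}
    (Cons : Set (Formula A C ar) → Set (Formula A C ar) → Prop) : Prop :=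
  ∀ (σ : A → Formula A C ar) (Γ Δ : Set (Formula A C ar)),
    Cons Γ Δ → Cons (Formula.subst σ '' Γ) (Formula.subst σ '' Δ)

/-- Evaluation of formulae from truth-functions and a valuation. -/
def evalF {A C : Type u} {ar : C → ℕ} {V : Type v}
    (tf : (c : C) → (Fin (ar c) → V) → V) (v : A → V) : Formula A C ar → V
  | .atom a => v a
  | .conn c Fs => tf c (fun i => evalF tf v (Fs i))

/-- Truth-functionality of an interpretation w.r.t. truth-functions. -/
def Compositional {A C : Type u} {ar : C → ℕ} {V : Type v} {W : Type w}
    (interp : Formula A C ar → W → V)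
    (tf : (c : C) → (Fin (ar c) → V) → V) : Prop :=
  ∀ (c : C) (Fs : Fin (ar c) → Formula A C ar) (w : W),
    interp (Formula.conn c Fs) w = tf c (fun i => interp (Fs i) w)

/-- Regular connectives. -/
def RegularRel {A C : Type u} {ar : C → ℕ}
    (Cons : Set (Formula A C ar) → Set (Formula A C ar) → Prop) : Prop :=
  ∀ c : C, ∃ Bp Bc : Set (Set (Fin (ar c)) × Set (Fin (ar c))),
    ∀ (Γ Δ : Set (Formula A C ar)) (Fs : Fin (ar c) → Formula A C ar),
      (Cons (Γ ∪ {Formula.conn c Fs}) Δ ↔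
        ∀ B ∈ Bp, Cons (Γ ∪ Fs '' B.1) (Fs '' B.2 ∪ Δ)) ∧
      (Cons Γ ({Formula.conn c Fs} ∪ Δ) ↔
        ∀ B ∈ Bc, Cons (Γ ∪ Fs '' B.1) (Fs '' B.2 ∪ Δ))

/-- monotonicity + reflexivity is equivalent to the existence of a
sound and complete intersective p-mixed semantics. -/
theorem statement_5 {L : Type u} (Cons : Set L → Set L → Prop) :
    (Monotonic Cons ∧ ReflRel Cons) ↔
      ∃ (V W Λ : Type u) (interp : L → W → V) (Dp Dc : Λ → Set V),
        (∀ l : Λ, Dp l ⊆ Dc l) ∧ IsIMS Cons interp Dp Dc := by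
  constructor
  · rintro ⟨hmono, hrefl⟩
    refine ⟨L, PUnit, {p : Set L × Set L // ¬ Cons p.1 p.2}, fun F _ => F,
      fun l => l.1.1, fun l => (l.1.2)ᶜ, ?_, ?_⟩
    · rintro ⟨⟨Γ₀, Δ₀⟩, hne⟩ F hF hF'
      exact hne (hmono (Set.singleton_subset_iff.mpr hF)
        (Set.singleton_subset_iff.mpr (by simpa using hF')) (hrefl F))
    · intro Γ Δ
      constructor
      · rintro h _ ⟨⟨Γ₀, Δ₀⟩, hne⟩ hsub
        simp only [Set.image_id'] at hsub ⊢
        by_contra hemp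
        rw [Set.not_nonempty_iff_eq_empty] at hemp
        have hΔ : Δ ⊆ Δ₀ := by
          intro F hF
          by_contra hF'
          exact (Set.eq_empty_iff_forall_notMem.mp hemp F) ⟨hF, hF'⟩
        exact hne (hmono hsub hΔ h)
      · intro h
        by_contra hne
        have := h PUnit.unit ⟨⟨Γ, Δ⟩, hne⟩ (by simp [Set.image_id'])
        simp [Set.image_id'] at this
  · rintro ⟨V, W, Λ, interp, Dp, Dc, hpc, hims⟩
    constructor
    · intro Γ₁ Γ₂ Δ₁ Δ₂ hΓ hΔ h
      rw [hims] at h ⊢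
      intro w l hsub
      obtain ⟨v, hv, hv'⟩ := h w l ((Set.image_mono hΓ).trans hsub)
      exact ⟨v, Set.image_mono hΔ hv, hv'⟩
    · intro F
      rw [hims]
      intro w l hsub
      exact ⟨interp F w, ⟨F, rfl, rfl⟩, hpc l (hsub ⟨F, rfl, rfl⟩)⟩
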